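/- Let (Y,d) be a compact metric space and g : Y → Y a continuous surjection satisfying Axioms 1 and 2 with constants β > 0, integer K ≥ 1 and 0 < γ < 1. Then the inverse limit system (Ŷ, d̂, ĝ) has totally disconnected local stable sets: there exists ε̂ > 0 such that for every y ∈ Ŷ and every 0 < ε ≤ ε̂, the local stable set Ŷ^s(y, ε) = {z ∈ Ŷ : d̂(ĝ^n(y), ĝ^n(z)) ≤ ε for all n ≥ 0} is totally disconnected. -/

import Mathlib

open Metric Function Topology

variable {Y : Type*} [MetricSpace Y] [CompactSpace Y]

/-- The stationary inverse limit of `g : Y → Y`. -/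
abbrev InvLim (g : Y → Y) : Type _ :=
  {y : ℕ → Y // ∀ n : ℕ, y n = g (y (n + 1))}

/-- The induced map `ĝ` on the inverse limit. -/
def ghat (g : Y → Y) (y : InvLim g) : InvLim g :=
  ⟨fun n => g (y.1 n), fun n => congrArg g (y.2 n)⟩

/-- The inverse `ĝ⁻¹` of the induced map on the inverse limit. -/
def ghatInv (g : Y → Y) (y : InvLim g) : InvLim g :=
  ⟨fun n => y.1 (n + 1), fun n => y.2 (n + 1)⟩

/-- `d'(x,y) = sup_n γ^n d(x_n, y_n)`. -/
noncomputable def dp (g : Y → Y) (γ : ℝ) (x y : InvLim g) : ℝ :=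
  ⨆ n : ℕ, γ ^ n * dist (x.1 n) (y.1 n)

/-- `d̂(x,y) = ∑_{k=0}^{K-1} γ^{-k} d'(ĝ^{-k} x, ĝ^{-k} y)`. -/
noncomputable def dhat (g : Y → Y) (γ : ℝ) (K : ℕ) (x y : InvLim g) : ℝ :=
  ∑ k ∈ Finset.range K, (γ ^ k)⁻¹ * dp g γ ((ghatInv g)^[k] x) ((ghatInv g)^[k] y)

/-- Axiom 1: `d(x,y) ≤ β` implies `d(g^K x, g^K y) ≤ γ^K d(g^{2K} x, g^{2K} y)`. -/
def axiom1 (g : Y → Y) (β : ℝ) (K : ℕ) (γ : ℝ) : Prop :=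
  ∀ x y : Y, dist x y ≤ β →
    dist (g^[K] x) (g^[K] y) ≤ γ ^ K * dist (g^[2 * K] x) (g^[2 * K] y)

/-- Axiom 2: `g^K(B(g^K x, ε)) ⊆ g^{2K}(B(x, γ ε))` for `0 < ε ≤ β`. -/
def axiom2 (g : Y → Y) (β : ℝ) (K : ℕ) (γ : ℝ) : Prop :=
  ∀ x : Y, ∀ ε : ℝ, 0 < ε → ε ≤ β →
    g^[K] '' Metric.closedBall (g^[K] x) ε ⊆ g^[2 * K] '' Metric.closedBall x (γ * ε)

/-- The local stable set `Ŷ^s(x, ε)` in the inverse limit. -/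
def Shat (g : Y → Y) (γ : ℝ) (K : ℕ) (x : InvLim g) (ε : ℝ) : Set (InvLim g) :=
  {y | ∀ n : ℕ, dhat g γ K ((ghat g)^[n] x) ((ghat g)^[n] y) ≤ ε}

/-- The local unstable set `Ŷ^u(x, ε)` in the inverse limit. -/
def Uhat (g : Y → Y) (γ : ℝ) (K : ℕ) (x : InvLim g) (ε : ℝ) : Set (InvLim g) :=
  {y | ∀ n : ℕ, dhat g γ K ((ghatInv g)^[n] x) ((ghatInv g)^[n] y) ≤ ε}

/-- Chain property: applying `g` `m` times to the `(j+m)`-th coordinate gives the `j`-th. -/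
lemma chain_iter (g : Y → Y) (f : InvLim g) : ∀ m j : ℕ, g^[m] (f.1 (j + m)) = f.1 j := by
  intro m
  induction m with
  | zero => intro j; simp
  | succ m ih =>
    intro j
    have h : j + (m + 1) = (j + 1) + m := by omega
    rw [Function.iterate_succ_apply', h, ih (j + 1)]
    exact (f.2 j).symm

/-- Coordinates of iterates of `ghat`. -/
lemma ghat_iter_coord (g : Y → Y) : ∀ (s : ℕ) (z : InvLim g) (n : ℕ),
    ((ghat g)^[s] z).1 n = g^[s] (z.1 n) := by
  intro s
  induction s with
  | zero => intro z n; simp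
  | succ s ih =>
    intro z n
    rw [Function.iterate_succ_apply', Function.iterate_succ_apply']
    show g (((ghat g)^[s] z).1 n) = g (g^[s] (z.1 n))
    rw [ih]

lemma dp_nonneg (g : Y → Y) {γ : ℝ} (hγ : 0 ≤ γ) (x y : InvLim g) : 0 ≤ dp g γ x y :=
  Real.iSup_nonneg fun n => mul_nonneg (pow_nonneg hγ n) dist_nonneg

/-- The zeroth coordinate distance is at most `dp`. -/
lemma coord0_le_dp (g : Y → Y) {γ : ℝ} (hγ0 : 0 ≤ γ) (hγ1 : γ ≤ 1) (x y : InvLim g) :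
    dist (x.1 0) (y.1 0) ≤ dp g γ x y := by
  obtain ⟨M, hM⟩ := Metric.isBounded_iff.mp (isCompact_univ (X := Y)).isBounded
  have hbdd : BddAbove (Set.range fun n : ℕ => γ ^ n * dist (x.1 n) (y.1 n)) := by
    refine ⟨max M 0, ?_⟩
    rintro _ ⟨n, rfl⟩
    have h1 : γ ^ n * dist (x.1 n) (y.1 n) ≤ M := by
      simpa using mul_le_mul (pow_le_one₀ hγ0 hγ1) (hM (Set.mem_univ _) (Set.mem_univ _))
        dist_nonneg one_pos.le
    exact h1.trans (le_max_left M 0)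
  have := le_ciSup hbdd 0
  simpa [dp] using this

/-- Membership in the stable set controls forward orbits of the zeroth coordinates. -/
lemma shat_orbit (g : Y → Y) {γ : ℝ} {K : ℕ} {β ε : ℝ} (hγ0 : 0 < γ) (hγ1 : γ < 1)
    (hK : 1 ≤ K) {y f : InvLim g} (hf : f ∈ Shat g γ K y ε) (s : ℕ) :
    dist (g^[s] (f.1 0)) (g^[s] (y.1 0)) ≤ ε := by
  have h := hf s
  set A := (ghat g)^[s] y
  set B := (ghat g)^[s] f
  have hterm : (γ ^ 0)⁻¹ * dp g γ ((ghatInv g)^[0] A) ((ghatInv g)^[0] B) ≤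
      dhat g γ K A B := by
    apply Finset.single_le_sum (f := fun k =>
      (γ ^ k)⁻¹ * dp g γ ((ghatInv g)^[k] A) ((ghatInv g)^[k] B))
    · intro k _
      exact mul_nonneg (inv_nonneg.mpr (pow_nonneg hγ0.le k)) (dp_nonneg g hγ0.le _ _)
    · exact Finset.mem_range.mpr hK
  simp only [pow_zero, inv_one, one_mul, Function.iterate_zero, id_eq] at hterm
  have h0 : dist (A.1 0) (B.1 0) ≤ dp g γ A B := coord0_le_dp g hγ0.le hγ1.le A B
  have hAB : dist (A.1 0) (B.1 0) = dist (g^[s] (f.1 0)) (g^[s] (y.1 0)) := by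
    rw [ghat_iter_coord, ghat_iter_coord, dist_comm]
  rw [hAB] at h0
  exact h0.trans (hterm.trans h)

/-- Collapse lemma: if all forward iterates of `u, v` stay within `β`, then
`g^[K] u = g^[K] v`. -/
lemma collapse (g : Y → Y) {β γ : ℝ} {K : ℕ} (h1 : axiom1 g β K γ)
    (hγ0 : 0 < γ) (hγ1 : γ < 1) (hK : 1 ≤ K) {u v : Y}
    (h : ∀ s : ℕ, dist (g^[s] u) (g^[s] v) ≤ β) : g^[K] u = g^[K] v := by
  have hβ0 : 0 ≤ β := dist_nonneg.trans (h 0)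
  have key : ∀ r m : ℕ, dist (g^[m + K] u) (g^[m + K] v) ≤ γ ^ (r * K) * β := by
    intro r
    induction r with
    | zero => intro m; simpa using h (m + K)
    | succ r ih =>
      intro m
      have hax := h1 (g^[m] u) (g^[m] v) (h m)
      have e1 : g^[K] (g^[m] u) = g^[m + K] u := by
        rw [← Function.iterate_add_apply, Nat.add_comm]
      have e1' : g^[K] (g^[m] v) = g^[m + K] v := by
        rw [← Function.iterate_add_apply, Nat.add_comm]
      have e2 : g^[2 * K] (g^[m] u) = g^[(m + K) + K] u := by
        rw [← Function.iterate_add_apply]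
        congr 1
        omega
      have e2' : g^[2 * K] (g^[m] v) = g^[(m + K) + K] v := by
        rw [← Function.iterate_add_apply]
        congr 1
        omega
      rw [e1, e1', e2, e2'] at hax
      calc dist (g^[m + K] u) (g^[m + K] v)
          ≤ γ ^ K * dist (g^[(m + K) + K] u) (g^[(m + K) + K] v) := hax
        _ ≤ γ ^ K * (γ ^ (r * K) * β) :=
            mul_le_mul_of_nonneg_left (ih (m + K)) (pow_nonneg hγ0.le K)
        _ = γ ^ ((r + 1) * K) * β := by ring_nf
  have hlim : Filter.Tendsto (fun r : ℕ => γ ^ (r * K) * β) Filter.atTop (nhds 0) := by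
    have h2 : Filter.Tendsto (fun r : ℕ => (γ ^ K) ^ r) Filter.atTop (nhds 0) :=
      tendsto_pow_atTop_nhds_zero_of_lt_one (pow_nonneg hγ0.le K)
        (pow_lt_one₀ hγ0.le hγ1 (by omega))
    have h3 : (fun r : ℕ => γ ^ (r * K) * β) = fun r : ℕ => (γ ^ K) ^ r * β := by
      funext r
      rw [← pow_mul, Nat.mul_comm]
    rw [h3]
    simpa using h2.mul_const β
  have hle : dist (g^[K] u) (g^[K] v) ≤ 0 := by
    refine ge_of_tendsto hlim (Filter.Eventually.of_forall fun r => ?_)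
    simpa using key r 0
  exact dist_le_zero.mp hle

/-- Key step: if `g^[K]` is constant on the `j`-th coordinate image of a preconnected
set of chains, that coordinate image is a subsingleton. -/
lemma coord_subsingleton (g : Y → Y) (hgc : Continuous g) {β γ : ℝ} {K : ℕ}
    (h1 : axiom1 g β K γ) (hβ : 0 < β) (hγ0 : 0 < γ) (t : Set (InvLim g))
    (hconn : IsPreconnected t) (j : ℕ)
    (H : ∀ f f' : InvLim g, f ∈ t → f' ∈ t → g^[K] (f.1 j) = g^[K] (f'.1 j)) :
    Set.Subsingleton ((fun f : InvLim g => f.1 j) '' t) := by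
  set C := (fun f : InvLim g => f.1 j) '' t with hC
  intro a ha b hb
  by_contra hne
  obtain ⟨fa, hfa, hfaj⟩ := ha
  -- isolation of `a` in `C`
  have hiso : ∃ δ > 0, ∀ x ∈ C, dist x a < δ → x = a := by
    by_contra hno
    push_neg at hno
    have hseq : ∀ n : ℕ, ∃ x ∈ C, dist x a < 1 / (n + 1) ∧ x ≠ a := by
      intro n
      obtain ⟨x, hx, hd, hxa⟩ := hno (1 / (n + 1)) (by positivity)
      exact ⟨x, hx, hd, hxa⟩
    choose b' hb'C hb'd hb'ne using hseq
    have hFex : ∀ n : ℕ, ∃ f : InvLim g, f ∈ t ∧ f.1 j = b' n := by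
      intro n
      obtain ⟨f, hf, hfj⟩ := hb'C n
      exact ⟨f, hf, hfj⟩
    choose F hFt hFj using hFex
    set w : ℕ → Y := fun n => (F n).1 (j + K) with hw
    obtain ⟨v, -, φ, hφ, hconv⟩ := (isCompact_univ (X := Y)).tendsto_subseq
      (x := w) (fun n => Set.mem_univ _)
    -- b' (φ n) → a
    have hba : Filter.Tendsto (fun n => b' (φ n)) Filter.atTop (nhds a) := by
      rw [tendsto_iff_dist_tendsto_zero]
      refine squeeze_zero (fun n => dist_nonneg) (fun n => ?_)
        tendsto_one_div_add_atTop_nhds_zero_nat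
      have h1n : dist (b' (φ n)) a < 1 / (φ n + 1) := hb'd (φ n)
      have h2n : (1 : ℝ) / (φ n + 1) ≤ 1 / (n + 1) := by
        have hnφ : (n : ℝ) ≤ φ n := Nat.cast_le.mpr hφ.le_apply
        apply one_div_le_one_div_of_le (by positivity)
        linarith
      exact h1n.le.trans h2n
    -- g^[K] v = a
    have hwb : ∀ n : ℕ, g^[K] (w (φ n)) = b' (φ n) := by
      intro n
      rw [hw]
      simp only
      rw [chain_iter g (F (φ n)) K j, hFj]
    have hgKv : g^[K] v = a := by
      have hlim1 : Filter.Tendsto (fun n => g^[K] (w (φ n))) Filter.atTop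
          (nhds (g^[K] v)) := ((hgc.iterate K).tendsto v).comp hconv
      have : (fun n => g^[K] (w (φ n))) = fun n => b' (φ n) := funext hwb
      rw [this] at hlim1
      exact tendsto_nhds_unique hlim1 hba
    -- pick n with dist (w (φ n)) v ≤ β
    obtain ⟨N, hN⟩ := Metric.tendsto_atTop.mp hconv β hβ
    have hax := h1 (w (φ N)) v (le_of_lt (hN N le_rfl))
    have e2 : g^[2 * K] (w (φ N)) = g^[K] (b' (φ N)) := by
      rw [two_mul, Function.iterate_add_apply, hwb]
    have e3 : g^[2 * K] v = g^[K] a := by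
      rw [two_mul, Function.iterate_add_apply, hgKv]
    have e4 : g^[K] (b' (φ N)) = g^[K] a := by
      rw [← hFj (φ N), ← hfaj]
      exact H _ _ (hFt (φ N)) hfa
    rw [hwb, hgKv, e2, e3, e4] at hax
    simp only [dist_self, mul_zero] at hax
    exact hb'ne (φ N) (dist_le_zero.mp hax)
  -- split by preconnectedness
  obtain ⟨δ, hδ, hδiso⟩ := hiso
  have hCconn : IsPreconnected C :=
    hconn.image _ ((continuous_apply j).comp continuous_subtype_val).continuousOn
  have hcover : C ⊆ Metric.ball a δ ∪ {a}ᶜ := by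
    intro x _
    by_cases hxa : x = a
    · left; rw [hxa]; exact Metric.mem_ball_self hδ
    · right; exact hxa
  have hres := hCconn (Metric.ball a δ) {a}ᶜ Metric.isOpen_ball isOpen_compl_singleton
    hcover ⟨a, ⟨fa, hfa, hfaj⟩, Metric.mem_ball_self hδ⟩ ⟨b, hb, fun hba => hne hba.symm⟩
  obtain ⟨x, hxC, hxu, hxv⟩ := hres
  exact hxv (hδiso x hxC (Metric.mem_ball.mp hxu))

/-- **Theorem A (totally disconnected stable sets).** If `(Y,d,g)` satisfies Axioms 1
and 2 then the inverse limit system has totally disconnected local stable sets. -/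
theorem stmt1 (g : Y → Y) (hgc : Continuous g) (hgs : Function.Surjective g)
    (β γ : ℝ) (K : ℕ) (hβ : 0 < β) (hK : 1 ≤ K) (hγ0 : 0 < γ) (hγ1 : γ < 1)
    (h1 : axiom1 g β K γ) (h2 : axiom2 g β K γ) :
    ∃ εhat : ℝ, 0 < εhat ∧ ∀ (y : InvLim g) (ε : ℝ), 0 < ε → ε ≤ εhat →
      IsTotallyDisconnected (Shat g γ K y ε) := by
  obtain ⟨K', hK'⟩ : ∃ K', K = K' + 1 := ⟨K - 1, by omega⟩
  refine ⟨β / 2, by linarith, ?_⟩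
  intro y ε hε hεβ t hts hconn
  -- all coordinate images of t are subsingletons, by induction on the coordinate
  have hCsub : ∀ j : ℕ, Set.Subsingleton ((fun f : InvLim g => f.1 j) '' t) := by
    intro j
    induction j with
    | zero =>
      apply coord_subsingleton g hgc h1 hβ hγ0 t hconn 0
      intro f f' hf hf'
      apply collapse g h1 hγ0 hγ1 hK
      intro s
      have ha := shat_orbit g (β := β) hγ0 hγ1 hK (hts hf) s
      have hb := shat_orbit g (β := β) hγ0 hγ1 hK (hts hf') s
      calc dist (g^[s] (f.1 0)) (g^[s] (f'.1 0))
          ≤ dist (g^[s] (f.1 0)) (g^[s] (y.1 0)) +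
            dist (g^[s] (y.1 0)) (g^[s] (f'.1 0)) := dist_triangle _ _ _
        _ ≤ ε + ε := add_le_add ha (by rw [dist_comm]; exact hb)
        _ ≤ β := by linarith
    | succ j ih =>
      apply coord_subsingleton g hgc h1 hβ hγ0 t hconn (j + 1)
      intro f f' hf hf'
      have hj : f.1 j = f'.1 j := ih ⟨f, hf, rfl⟩ ⟨f', hf', rfl⟩
      have hg1 : g (f.1 (j + 1)) = g (f'.1 (j + 1)) := by
        rw [← f.2 j, ← f'.2 j, hj]
      rw [hK', Function.iterate_succ_apply, Function.iterate_succ_apply, hg1]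
  intro x hx x' hx'
  exact Subtype.ext (funext fun j => hCsub j ⟨x, hx, rfl⟩ ⟨x', hx', rfl⟩)
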